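/- For all f, v ∈ ℕ, the convex hull of the set of matrices in [0,1]^{f×v} of rank at most 1 equals the convex hull of the set of matrices in {0,1}^{f×v} of rank at most 1; equivalently, for any W ∈ ℝ^{f×v}, the maximum of ⟨W,R⟩ over all rank-at-most-1 matrices R ∈ [0,1]^{f×v} is attained at a 0/1 rank-at-most-1 matrix. -/
import Mathlib

/-- The Frobenius inner product `⟨W, R⟩ = Σ_{i,j} W_{ij}·R_{ij}`. -/
def frob {f v : ℕ} (W R : Matrix (Fin f) (Fin v) ℝ) : ℝ :=
  ∑ i, ∑ j, W i j * R i j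

open Matrix Set

private lemma rank_vmv_le {f v : ℕ} (x : Fin f → ℝ) (y : Fin v → ℝ) :
    (vecMulVec x y).rank ≤ 1 := by
  rw [vecMulVec_eq Unit]
  exact (Matrix.rank_mul_le_left _ _).trans ((Matrix.rank_le_card_width _).trans (by simp))

private lemma rank_decomp {f v : ℕ} (R : Matrix (Fin f) (Fin v) ℝ) (h : R.rank ≤ 1) :
    ∃ (x : Fin f → ℝ) (y : Fin v → ℝ), ∀ i j, R i j = x i * y j := by
  rw [Matrix.rank_eq_finrank_span_cols, Submodule.finrank_le_one_iff_isPrincipal] at h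
  obtain ⟨a, ha⟩ := h
  have hc : ∀ j, ∃ c : ℝ, c • a = Rᵀ j := fun j => by
    rw [← Submodule.mem_span_singleton, ← ha]
    exact Submodule.subset_span (Set.mem_range_self j)
  choose c hcc using hc
  refine ⟨a, c, fun i j => ?_⟩
  have := congrFun (hcc j) i
  simp only [Pi.smul_apply, smul_eq_mul, transpose_apply] at this
  rw [← this]; ring

/-- Normalization: a rank ≤ 1 matrix with entries in `[0,1]` is `x yᵀ` with `x, y ∈ [0,1]`. -/
private lemma box_decomp {f v : ℕ} (R : Matrix (Fin f) (Fin v) ℝ)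
    (hb : ∀ i j, R i j ∈ Set.Icc (0 : ℝ) 1) (h : R.rank ≤ 1) :
    ∃ (x : Fin f → ℝ) (y : Fin v → ℝ), (∀ i, x i ∈ Set.Icc (0:ℝ) 1) ∧
      (∀ j, y j ∈ Set.Icc (0:ℝ) 1) ∧ R = vecMulVec x y := by
  obtain ⟨u, w, huw⟩ := rank_decomp R h
  have cross : ∀ i j i₀ j₀, R i j * R i₀ j₀ = R i j₀ * R i₀ j := by
    intro i j i₀ j₀; simp only [huw]; ring
  rcases isEmpty_or_nonempty (Fin f) with hf | hf
  · exact ⟨0, 0, fun i => hf.elim i, fun j => by simp, by ext i j; exact hf.elim i⟩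
  rcases isEmpty_or_nonempty (Fin v) with hv | hv
  · exact ⟨0, 0, fun i => by simp, fun j => hv.elim j, by ext i j; exact hv.elim j⟩
  obtain ⟨⟨i₀, j₀⟩, -, hmax⟩ := Finset.exists_max_image (Finset.univ : Finset (Fin f × Fin v))
    (fun p => R p.1 p.2) Finset.univ_nonempty
  simp only [Finset.mem_univ, forall_true_left] at hmax
  have hmax' : ∀ i j, R i j ≤ R i₀ j₀ := fun i j => hmax (i, j)
  rcases eq_or_lt_of_le (hb i₀ j₀).1 with h0 | h0
  · refine ⟨0, 0, fun i => by simp, fun j => by simp, ?_⟩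
    ext i j
    have := hmax' i j
    simp only [vecMulVec_apply, Pi.zero_apply, zero_mul]
    exact le_antisymm (this.trans h0.ge) (hb i j).1
  · refine ⟨fun i => R i j₀ / R i₀ j₀, fun j => R i₀ j, ?_, fun j => hb i₀ j, ?_⟩
    · intro i
      exact ⟨div_nonneg (hb i j₀).1 h0.le, div_le_one_of_le₀ (hmax' i j₀) h0.le⟩
    · ext i j
      simp only [vecMulVec_apply]
      rw [div_mul_eq_mul_div, ← cross i j i₀ j₀, mul_div_assoc, div_self h0.ne', mul_one]

private def vmvR {f v : ℕ} (x : Fin f → ℝ) : (Fin v → ℝ) →ₗ[ℝ] Matrix (Fin f) (Fin v) ℝ where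
  toFun y := vecMulVec x y
  map_add' a b := by ext i j; simp [vecMulVec_apply, mul_add]
  map_smul' c a := by ext i j; simp [vecMulVec_apply]; ring

private def vmvL {f v : ℕ} (y : Fin v → ℝ) : (Fin f → ℝ) →ₗ[ℝ] Matrix (Fin f) (Fin v) ℝ where
  toFun x := vecMulVec x y
  map_add' a b := by ext i j; simp [vecMulVec_apply, add_mul]
  map_smul' c a := by ext i j; simp [vecMulVec_apply]; ring

private lemma vec_mem_hull {n : ℕ} (x : Fin n → ℝ) (hx : ∀ i, x i ∈ Set.Icc (0:ℝ) 1) :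
    x ∈ convexHull ℝ (Set.univ.pi fun _ : Fin n => ({0, 1} : Set ℝ)) := by
  have : Set.Icc (0:ℝ) 1 = convexHull ℝ {0, 1} := by
    rw [convexHull_pair, segment_eq_Icc zero_le_one]
  exact mem_convexHull_pi fun i _ => this ▸ hx i

/-- Every rank ≤ 1 matrix with entries in `[0,1]` lies in the convex hull of rank ≤ 1
0/1 matrices. -/
private lemma mem_hull_zeroOne {f v : ℕ} (R : Matrix (Fin f) (Fin v) ℝ)
    (hb : ∀ i j, R i j ∈ Set.Icc (0 : ℝ) 1) (h : R.rank ≤ 1) :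
    R ∈ convexHull ℝ {R : Matrix (Fin f) (Fin v) ℝ |
        (∀ i j, R i j = 0 ∨ R i j = 1) ∧ R.rank ≤ 1} := by
  set S : Set (Matrix (Fin f) (Fin v) ℝ) :=
    {R | (∀ i j, R i j = 0 ∨ R i j = 1) ∧ R.rank ≤ 1} with hS
  obtain ⟨x, y, hx, hy, rfl⟩ := box_decomp R hb h
  have h1 : vecMulVec x y ∈ (vmvR x) '' (convexHull ℝ
      (Set.univ.pi fun _ : Fin v => ({0, 1} : Set ℝ))) :=
    ⟨y, vec_mem_hull y hy, rfl⟩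
  rw [LinearMap.image_convexHull] at h1
  refine convexHull_min ?_ (convex_convexHull ℝ S) h1
  rintro M ⟨t, ht, rfl⟩
  have h2 : vecMulVec x t ∈ (vmvL t) '' (convexHull ℝ
      (Set.univ.pi fun _ : Fin f => ({0, 1} : Set ℝ))) :=
    ⟨x, vec_mem_hull x hx, rfl⟩
  rw [LinearMap.image_convexHull] at h2
  have h3 : (vmvL t) '' (Set.univ.pi fun _ : Fin f => ({0, 1} : Set ℝ)) ⊆ S := by
    rintro M ⟨s, hs, rfl⟩
    refine ⟨fun i j => ?_, rank_vmv_le s t⟩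
    have hsi := hs i (Set.mem_univ i)
    have htj := ht j (Set.mem_univ j)
    simp only [Set.mem_insert_iff, Set.mem_singleton_iff] at hsi htj
    show s i * t j = 0 ∨ s i * t j = 1
    rcases hsi with h | h <;> rcases htj with h' | h' <;> simp [h, h']
  exact convexHull_min (h3.trans (subset_convexHull ℝ S)) (convex_convexHull ℝ S) h2

/-- The convex hull of the rank-at-most-one matrices with entries in `[0,1]` equals the convex
hull of the rank-at-most-one matrices with entries in `{0,1}`; equivalently, for any `W` the
maximum of `⟨W, R⟩` over rank-at-most-one matrices `R ∈ [0,1]^{f×v}` is attained at a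
rank-at-most-one 0/1 matrix. -/
theorem convexHull_rankOne_box_eq_convexHull_rankOne_zeroOne (f v : ℕ)
    (W : Matrix (Fin f) (Fin v) ℝ) :
    convexHull ℝ {R : Matrix (Fin f) (Fin v) ℝ |
        (∀ i j, R i j ∈ Set.Icc (0 : ℝ) 1) ∧ R.rank ≤ 1} =
      convexHull ℝ {R : Matrix (Fin f) (Fin v) ℝ |
        (∀ i j, R i j = 0 ∨ R i j = 1) ∧ R.rank ≤ 1} ∧
    ∃ R₀ : Matrix (Fin f) (Fin v) ℝ, (∀ i j, R₀ i j = 0 ∨ R₀ i j = 1) ∧ R₀.rank ≤ 1 ∧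
      IsGreatest {a | ∃ R : Matrix (Fin f) (Fin v) ℝ,
        (∀ i j, R i j ∈ Set.Icc (0 : ℝ) 1) ∧ R.rank ≤ 1 ∧ a = frob W R} (frob W R₀) := by
  set S : Set (Matrix (Fin f) (Fin v) ℝ) :=
    {R | (∀ i j, R i j = 0 ∨ R i j = 1) ∧ R.rank ≤ 1} with hS
  have hsub : S ⊆ {R : Matrix (Fin f) (Fin v) ℝ |
      (∀ i j, R i j ∈ Set.Icc (0 : ℝ) 1) ∧ R.rank ≤ 1} := by
    rintro R ⟨h01, hr⟩
    refine ⟨fun i j => ?_, hr⟩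
    rcases h01 i j with h | h <;> simp [h]
  have hSfin : S.Finite := by
    have : S ⊆ Set.range (fun b : Fin f → Fin v → Bool =>
        (Matrix.of fun i j => if b i j then (1:ℝ) else 0)) := by
      rintro R ⟨h01, -⟩
      refine ⟨fun i j => decide (R i j = 1), ?_⟩
      ext i j
      rcases h01 i j with h | h <;> simp [Matrix.of_apply, h]
    exact Set.Finite.subset (Set.finite_range _) this
  have h0S : (0 : Matrix (Fin f) (Fin v) ℝ) ∈ S :=
    ⟨fun i j => Or.inl rfl, by rw [Matrix.rank_zero]; exact zero_le_one⟩
  -- convexity of frob W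
  have hfrob_add : ∀ (a b : ℝ) (P Q : Matrix (Fin f) (Fin v) ℝ),
      frob W (a • P + b • Q) = a * frob W P + b * frob W Q := by
    intro a b P Q
    simp only [frob, Matrix.add_apply, Matrix.smul_apply, smul_eq_mul, mul_add,
      Finset.sum_add_distrib, Finset.mul_sum, mul_left_comm, mul_comm, mul_assoc]
  have hconv : ConvexOn ℝ Set.univ (frob W) := by
    refine ⟨convex_univ, fun P _ Q _ a b _ _ _ => ?_⟩
    rw [hfrob_add a b P Q]; simp [smul_eq_mul]
  -- the argmax over the finite set S
  obtain ⟨R₀, hR₀T, hmaxS⟩ := Finset.exists_max_image hSfin.toFinset (frob W)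
    ⟨0, hSfin.mem_toFinset.2 h0S⟩
  have hR₀ : R₀ ∈ S := hSfin.mem_toFinset.1 hR₀T
  have key : ∀ R : Matrix (Fin f) (Fin v) ℝ,
      (∀ i j, R i j ∈ Set.Icc (0 : ℝ) 1) → R.rank ≤ 1 → frob W R ≤ frob W R₀ := by
    intro R hbR hrR
    obtain ⟨M, hM, hle⟩ := hconv.exists_ge_of_mem_convexHull (Set.subset_univ S)
      (mem_hull_zeroOne R hbR hrR)
    exact hle.trans (hmaxS M (hSfin.mem_toFinset.2 hM))
  constructor
  · refine le_antisymm ?_ (convexHull_mono hsub)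
    exact convexHull_min (fun R hR => mem_hull_zeroOne R hR.1 hR.2) (convex_convexHull ℝ S)
  · refine ⟨R₀, hR₀.1, hR₀.2, ⟨R₀, (hsub hR₀).1, hR₀.2, rfl⟩, ?_⟩
    rintro a ⟨R, hbR, hrR, rfl⟩
    exact key R hbR hrR
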